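/- For all real a and all X > 0 with X ≥ 2(a−1), it holds that ∫_X^∞ t^{a−1} e^{−t} dt ≤ 2 e^{−X} X^{a−1}. -/

import Mathlib

open MeasureTheory

lemma aux_integral_exp_half (X : ℝ) :
    ∫ t in Set.Ioi X, Real.exp (-(1/2) * t) = 2 * Real.exp (-(1/2) * X) := by
  have h : ∀ x ∈ Set.Ici X, HasDerivAt (fun t : ℝ => -2 * Real.exp (-(1/2) * t))
      (Real.exp (-(1/2) * x)) x := by
    intro x _
    have h := (((hasDerivAt_id x).const_mul (-(1/2) : ℝ)).exp).const_mul (-2 : ℝ)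
    convert h using 1
    · rfl
    · rfl
    · rfl
    simp
    ring
  have htend : Filter.Tendsto (fun t : ℝ => -2 * Real.exp (-(1/2) * t)) Filter.atTop (nhds 0) := by
    have h1 : Filter.Tendsto (fun t : ℝ => Real.exp (-(1/2) * t)) Filter.atTop (nhds 0) :=
      Real.tendsto_exp_atBot.comp (Filter.tendsto_id.const_mul_atTop_of_neg (by norm_num))
    simpa using h1.const_mul (-2 : ℝ)
  have hint : IntegrableOn (fun t : ℝ => Real.exp (-(1/2) * t)) (Set.Ioi X) :=
    exp_neg_integrableOn_Ioi X (by norm_num)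
  have key := MeasureTheory.integral_Ioi_of_hasDerivAt_of_tendsto' h hint htend
  rw [key]; ring

theorem incomplete_gamma_tail_bound (a X : ℝ) (hX : 0 < X) (hXa : 2 * (a - 1) ≤ X) :
    ∫ t in Set.Ioi X, t ^ (a - 1) * Real.exp (-t) ≤
      2 * Real.exp (-X) * X ^ (a - 1) := by
  set C : ℝ := X ^ (a - 1) * Real.exp (-(1/2) * X) with hC
  have hbound : ∀ t ∈ Set.Ioi X, t ^ (a - 1) * Real.exp (-t) ≤ C * Real.exp (-(1/2) * t) := by
    intro t ht
    have htX : X < t := ht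
    have ht0 : 0 < t := hX.trans htX
    have hlog : Real.log X ≤ Real.log t := Real.log_le_log hX htX.le
    have hlog2 : Real.log t - Real.log X ≤ (t - X) / X := by
      have h1 : Real.log (t / X) ≤ t / X - 1 :=
        Real.log_le_sub_one_of_pos (div_pos ht0 hX)
      rw [Real.log_div ht0.ne' hX.ne'] at h1
      have h2 : t / X - 1 = (t - X) / X := by field_simp
      linarith [h2 ▸ h1]
    have key : (a - 1) * Real.log t - t ≤ (a - 1) * Real.log X - (1/2) * X - (1/2) * t := by
      rcases le_or_gt (a - 1) 0 with h | h
      · nlinarith [mul_nonpos_of_nonpos_of_nonneg h (sub_nonneg.mpr hlog)]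
      · have h2 : (a - 1) * (Real.log t - Real.log X) ≤ (a - 1) * ((t - X) / X) :=
          mul_le_mul_of_nonneg_left hlog2 h.le
        rw [← mul_div_assoc, le_div_iff₀ hX] at h2
        nlinarith [mul_nonneg (sub_nonneg.mpr htX.le) (sub_nonneg.mpr hXa)]
    calc t ^ (a - 1) * Real.exp (-t)
        = Real.exp ((a - 1) * Real.log t - t) := by
          rw [Real.rpow_def_of_pos ht0, ← Real.exp_add]
          congr 1; ring
      _ ≤ Real.exp ((a - 1) * Real.log X - (1/2) * X - (1/2) * t) := Real.exp_le_exp.mpr key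
      _ = C * Real.exp (-(1/2) * t) := by
          rw [hC, Real.rpow_def_of_pos hX, ← Real.exp_add, ← Real.exp_add]
          congr 1; ring
  have hgint : IntegrableOn (fun t : ℝ => C * Real.exp (-(1/2) * t)) (Set.Ioi X) :=
    (exp_neg_integrableOn_Ioi X (by norm_num)).const_mul C
  have hfmeas : AEStronglyMeasurable (fun t : ℝ => t ^ (a - 1) * Real.exp (-t))
      (volume.restrict (Set.Ioi X)) := by
    apply ContinuousOn.aestronglyMeasurable _ measurableSet_Ioi
    exact (continuousOn_id.rpow_const fun x hx => Or.inl (hX.trans hx).ne').mul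
      (Real.continuous_exp.comp continuous_neg).continuousOn
  have hfint : IntegrableOn (fun t : ℝ => t ^ (a - 1) * Real.exp (-t)) (Set.Ioi X) := by
    refine hgint.mono' hfmeas ?_
    filter_upwards [ae_restrict_mem measurableSet_Ioi] with t ht
    rw [Real.norm_eq_abs, abs_of_nonneg
      (mul_nonneg (Real.rpow_nonneg (hX.trans ht).le _) (Real.exp_pos _).le)]
    exact hbound t ht
  calc ∫ t in Set.Ioi X, t ^ (a - 1) * Real.exp (-t)
      ≤ ∫ t in Set.Ioi X, C * Real.exp (-(1/2) * t) :=
        setIntegral_mono_on hfint hgint measurableSet_Ioi hbound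
    _ = C * (2 * Real.exp (-(1/2) * X)) := by
        rw [MeasureTheory.integral_const_mul, aux_integral_exp_half]
    _ = 2 * Real.exp (-X) * X ^ (a - 1) := by
        have hx : Real.exp (-(1/2)*X) * Real.exp (-(1/2)*X) = Real.exp (-X) := by
          rw [← Real.exp_add]; congr 1; ring
        rw [hC]
        linear_combination (2 * X ^ (a - 1)) * hx
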